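/- Let d ≥ 3 be an odd integer. For each prime q not dividing d, let s_q denote the multiplicative order of d modulo q. For a prime p ≡ 3 (mod 4), let Q(p) be the set of odd primes q dividing p − 1 and not dividing d, and when Q(p) is nonempty set a(p) = min{ s_q : q ∈ Q(p) }. Then the set A = { a(p) : p prime, p ≡ 3 (mod 4), Q(p) ≠ ∅ } is infinite. -/

import Mathlib

private lemma cop_of_modeq {a b n : ℕ} (h : a ≡ b [MOD n]) (hb : Nat.Coprime b n) :
    Nat.Coprime a n := by
  have h1 : Nat.gcd n a = Nat.gcd n b := by
    rw [Nat.gcd_rec n a, Nat.gcd_rec n b, h]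
  unfold Nat.Coprime at *
  rw [Nat.gcd_comm] at hb ⊢
  rw [h1]; exact hb

/-- Let `d ≥ 3` be odd. For a prime `p ≡ 3 (mod 4)` with `Q(p)` (the set of odd primes
dividing `p − 1` and not dividing `d`) nonempty, let `a(p)` be the minimum over
`q ∈ Q(p)` of the multiplicative order `s_q` of `d` modulo `q`. Then the set
`A = { a(p) }` of all these values is infinite. -/
theorem stmt15 (d : ℕ) (hd : 3 ≤ d) (hodd : Odd d) :
    { m : ℕ | ∃ p : ℕ, p.Prime ∧ p % 4 = 3 ∧
        {q : ℕ | q.Prime ∧ Odd q ∧ q ∣ p - 1 ∧ ¬ q ∣ d}.Nonempty ∧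
        m = sInf { s : ℕ | ∃ q : ℕ,
              (q.Prime ∧ Odd q ∧ q ∣ p - 1 ∧ ¬ q ∣ d) ∧
              s = orderOf ((d : ZMod q)) } }.Infinite := by
  set A := { m : ℕ | ∃ p : ℕ, p.Prime ∧ p % 4 = 3 ∧
        {q : ℕ | q.Prime ∧ Odd q ∧ q ∣ p - 1 ∧ ¬ q ∣ d}.Nonempty ∧
        m = sInf { s : ℕ | ∃ q : ℕ,
              (q.Prime ∧ Odd q ∧ q ∣ p - 1 ∧ ¬ q ∣ d) ∧
              s = orderOf ((d : ZMod q)) } } with hA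
  have key : ∀ n : ℕ, ∃ m ∈ A, n < m := by
    intro n
    -- M : product of d^s - 1
    set M : ℕ := ∏ s ∈ Finset.Icc 1 n, (d ^ s - 1) with hM
    have hMpos : 0 < M := by
      apply Finset.prod_pos
      intro s hs
      have hs1 : 1 ≤ s := (Finset.mem_Icc.mp hs).1
      have : d ≤ d ^ s := by
        calc d = d ^ 1 := (pow_one d).symm
        _ ≤ d ^ s := Nat.pow_le_pow_right (by omega) hs1
      omega
    -- big prime Q
    obtain ⟨Q, hQge, hQ⟩ := Nat.exists_infinite_primes (M + d + 1)
    have hQM : M < Q := by omega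
    have hQd : d < Q := by omega
    have hQ2 : 2 < Q := by omega
    have hQodd : Odd Q := hQ.odd_of_ne_two (by omega)
    have hQndM : ¬ Q ∣ M := fun h => absurd (Nat.le_of_dvd hMpos h) (by omega)
    have hQnd : ¬ Q ∣ d := fun h => absurd (Nat.le_of_dvd (by omega) h) (by omega)
    -- R : product of bad primes
    set R : ℕ := ∏ r ∈ M.primeFactors.filter (fun r => r ≠ 2 ∧ ¬ r ∣ d), r with hR
    have hRM : R ∣ M := by
      refine dvd_trans ?_ (Nat.prod_primeFactors_dvd M)
      exact Finset.prod_dvd_prod_of_subset _ _ _ (Finset.filter_subset _ _)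
    have hRpos : 0 < R := Nat.pos_of_dvd_of_pos hRM hMpos
    have hRodd : Odd R := by
      rw [← Nat.not_even_iff_odd, even_iff_two_dvd]
      intro h2
      obtain ⟨r, hrmem, hr2⟩ := (Nat.prime_two.prime).exists_mem_finset_dvd h2
      have hrf := Finset.mem_filter.mp hrmem
      have hrp : r.Prime := Nat.prime_of_mem_primeFactors hrf.1
      have : r = 2 := ((Nat.prime_dvd_prime_iff_eq Nat.prime_two hrp).mp hr2).symm
      exact hrf.2.1 this
    have hQR : ¬ Q ∣ R := fun h =>
      absurd (Nat.le_of_dvd hRpos h) (by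
        have := Nat.le_of_dvd hMpos hRM; omega)
    -- coprimalities
    have c4Q : Nat.Coprime 4 Q := Nat.Coprime.symm <| (hQ.coprime_iff_not_dvd).mpr
      (fun h => absurd (Nat.le_of_dvd (by norm_num) h) (by omega))
    have c4R : Nat.Coprime 4 R := by
      have : Nat.Coprime 2 R := Nat.coprime_two_left.mpr hRodd
      have h4 : (4 : ℕ) = 2 ^ 2 := by norm_num
      rw [h4]; exact this.pow_left 2
    have cQR : Nat.Coprime Q R := (hQ.coprime_iff_not_dvd).mpr hQR
    have c4QR : Nat.Coprime (4 * Q) R := Nat.Coprime.mul c4R cQR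
    -- CRT
    obtain ⟨k, hk4, hkQ⟩ := Nat.chineseRemainder c4Q 3 1
    obtain ⟨a, hak, haR⟩ := Nat.chineseRemainder c4QR k 2
    have ha4 : a ≡ 3 [MOD 4] := (hak.of_dvd ⟨Q, rfl⟩).trans hk4
    have haQ : a ≡ 1 [MOD Q] := (hak.of_dvd ⟨4, by ring⟩).trans hkQ
    -- N and unit
    set N : ℕ := 4 * Q * R with hN
    haveI : NeZero N := ⟨by positivity⟩
    have haN : Nat.Coprime a N := by
      refine Nat.Coprime.mul_right (Nat.Coprime.mul_right ?_ ?_) ?_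
      · exact cop_of_modeq ha4 (by norm_num)
      · exact cop_of_modeq haQ (Nat.coprime_one_left Q)
      · exact cop_of_modeq haR (by
          have : Nat.Coprime 2 R := Nat.coprime_two_left.mpr hRodd
          exact this)
    have haU : IsUnit ((a : ZMod N)) := (ZMod.isUnit_iff_coprime a N).mpr haN
    -- Dirichlet
    obtain ⟨p, hp1, hp, hpa'⟩ := Nat.forall_exists_prime_gt_and_eq_mod haU 1
    have hpa : p ≡ a [MOD N] := (ZMod.natCast_eq_natCast_iff _ _ _).mp hpa'
    have hp4 : p ≡ 3 [MOD 4] := (hpa.of_dvd ⟨Q * R, by ring⟩).trans ha4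
    have hpQ : p ≡ 1 [MOD Q] := (hpa.of_dvd ⟨4 * R, by ring⟩).trans haQ
    have hpR : p ≡ 2 [MOD R] := (hpa.of_dvd ⟨4 * Q, by ring⟩).trans haR
    have hp4' : p % 4 = 3 := by
      have := hp4; unfold Nat.ModEq at this; omega
    have hQdvd : Q ∣ p - 1 := (Nat.modEq_iff_dvd' (by omega)).mp hpQ.symm
    have hQmem : Q ∈ {q : ℕ | q.Prime ∧ Odd q ∧ q ∣ p - 1 ∧ ¬ q ∣ d} :=
      ⟨hQ, hQodd, hQdvd, hQnd⟩
    set S := { s : ℕ | ∃ q : ℕ,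
        (q.Prime ∧ Odd q ∧ q ∣ p - 1 ∧ ¬ q ∣ d) ∧ s = orderOf ((d : ZMod q)) } with hS
    have hSne : S.Nonempty := ⟨orderOf ((d : ZMod Q)), Q, hQmem, rfl⟩
    -- every element of S is > n
    have hbig : ∀ s ∈ S, n < s := by
      rintro s ⟨q, ⟨hq, hqodd, hqdvd, hqnd⟩, rfl⟩
      haveI : Fact q.Prime := ⟨hq⟩
      have hq1 : 1 < q := hq.one_lt
      have hdq : (d : ZMod q) ≠ 0 := by
        rw [Ne, ZMod.natCast_eq_zero_iff]; exact hqnd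
      have hpow : (d : ZMod q) ^ (q - 1) = 1 := ZMod.pow_card_sub_one_eq_one hdq
      have hfin : IsOfFinOrder ((d : ZMod q)) :=
        isOfFinOrder_iff_pow_eq_one.mpr ⟨q - 1, by omega, hpow⟩
      have hordpos : 0 < orderOf ((d : ZMod q)) := hfin.orderOf_pos
      by_contra hcon
      push_neg at hcon
      set t := orderOf ((d : ZMod q)) with ht
      have hds : 1 ≤ d ^ t := Nat.one_le_pow _ _ (by omega)
      have hqdvd' : q ∣ d ^ t - 1 := by
        have h1 : (d : ZMod q) ^ t = 1 := pow_orderOf_eq_one _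
        have h0 : ((d ^ t - 1 : ℕ) : ZMod q) = 0 := by
          rw [Nat.cast_sub hds]
          push_cast
          rw [h1, sub_self]
        exact (ZMod.natCast_eq_zero_iff _ _).mp h0
      have hdvM : d ^ t - 1 ∣ M :=
        Finset.dvd_prod_of_mem _ (Finset.mem_Icc.mpr ⟨hordpos, hcon⟩)
      have hqM : q ∣ M := hqdvd'.trans hdvM
      have hqR : q ∣ R := by
        refine Finset.dvd_prod_of_mem _ (Finset.mem_filter.mpr ⟨?_, ?_, hqnd⟩)
        · exact Nat.mem_primeFactors.mpr ⟨hq, hqM, by omega⟩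
        · intro h2; rw [h2] at hqodd; exact (Nat.not_odd_iff_even.mpr (by norm_num)) hqodd
      have hpq2 : p ≡ 2 [MOD q] := hpR.of_dvd hqR
      have hpq1 : p ≡ 1 [MOD q] := ((Nat.modEq_iff_dvd' (by omega)).mpr hqdvd).symm
      have h12 : (1 : ℕ) ≡ 2 [MOD q] := hpq1.symm.trans hpq2
      have : q ∣ 1 := (Nat.modEq_iff_dvd' (by norm_num)).mp h12
      have := Nat.le_of_dvd (by norm_num) this
      omega
    refine ⟨sInf S, ⟨p, hp, hp4', ⟨Q, hQmem⟩, rfl⟩, hbig _ (Nat.sInf_mem hSne)⟩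
  apply Set.infinite_of_not_bddAbove
  rintro ⟨b, hb⟩
  obtain ⟨m, hm, hbm⟩ := key b
  exact absurd (hb hm) (not_le.mpr hbm)
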